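/- Let φ and ψ be unit vectors in ℂ^n (with the standard Hermitian inner product ⟨·,·⟩). Define the tensor-product vectors φ⊗ψ and ψ⊗φ in ℂ^{n×n} componentwise by (φ⊗ψ)(i,j) = φ(i)·ψ(j). Then ‖(1/2)(φ⊗ψ + ψ⊗φ)‖² = (1 + |⟨φ,ψ⟩|²)/2 and ‖(1/2)(φ⊗ψ − ψ⊗φ)‖² = (1 − |⟨φ,ψ⟩|²)/2. (These are respectively the probabilities of measuring outcome 0 and outcome 1 in the swap test applied to φ and ψ.) -/

import Mathlib

open scoped InnerProductSpace
lemma tensor_inner {n : ℕ} (a b c d : EuclideanSpace ℂ (Fin n))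
    (x y : EuclideanSpace ℂ (Fin n × Fin n))
    (hx : ∀ p : Fin n × Fin n, x p = a p.1 * b p.2)
    (hy : ∀ p : Fin n × Fin n, y p = c p.1 * d p.2) :
    ⟪x, y⟫_ℂ = ⟪a, c⟫_ℂ * ⟪b, d⟫_ℂ := by
  simp only [PiLp.inner_apply, RCLike.inner_apply, hx, hy]
  rw [Fintype.sum_prod_type, Finset.sum_mul_sum]
  exact Finset.sum_congr rfl fun i _ => Finset.sum_congr rfl fun j _ => by
    simp [map_mul]; ring

theorem stmt_2 (n : ℕ) (φ ψ : EuclideanSpace ℂ (Fin n))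
    (hφ : ‖φ‖ = 1) (hψ : ‖ψ‖ = 1)
    (φψ ψφ : EuclideanSpace ℂ (Fin n × Fin n))
    (hφψ : ∀ p : Fin n × Fin n, φψ p = φ p.1 * ψ p.2)
    (hψφ : ∀ p : Fin n × Fin n, ψφ p = ψ p.1 * φ p.2) :
    ‖(1 / 2 : ℂ) • (φψ + ψφ)‖ ^ 2 = (1 + ‖⟪φ, ψ⟫_ℂ‖ ^ 2) / 2 ∧
    ‖(1 / 2 : ℂ) • (φψ - ψφ)‖ ^ 2 = (1 - ‖⟪φ, ψ⟫_ℂ‖ ^ 2) / 2 := by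
  have hφφ : ⟪φ, φ⟫_ℂ = 1 := by
    rw [inner_self_eq_norm_sq_to_K, hφ]; norm_num
  have hψψ : ⟪ψ, ψ⟫_ℂ = 1 := by
    rw [inner_self_eq_norm_sq_to_K, hψ]; norm_num
  have h1 : ‖φψ‖ ^ 2 = 1 := by
    rw [@norm_sq_eq_re_inner ℂ, tensor_inner φ ψ φ ψ _ _ hφψ hφψ, hφφ, hψψ]; norm_num
  have h2 : ‖ψφ‖ ^ 2 = 1 := by
    rw [@norm_sq_eq_re_inner ℂ, tensor_inner ψ φ ψ φ _ _ hψφ hψφ, hφφ, hψψ]; norm_num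
  have h3 : RCLike.re ⟪φψ, ψφ⟫_ℂ = ‖⟪φ, ψ⟫_ℂ‖ ^ 2 := by
    rw [tensor_inner φ ψ ψ φ _ _ hφψ hψφ, ← inner_conj_symm ψ φ, Complex.mul_conj]
    simp [Complex.sq_norm]
  have hn : ∀ v : EuclideanSpace ℂ (Fin n × Fin n),
      ‖(1 / 2 : ℂ) • v‖ ^ 2 = ‖v‖ ^ 2 / 4 := by
    intro v; rw [norm_smul]; simp; ring
  constructor
  · rw [hn, @norm_add_sq ℂ, h1, h2, h3]; ring
  · rw [hn, @norm_sub_sq ℂ, h1, h2, h3]; ring
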